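/- For every α > 1, every ν > 0, and every pair of means m₁, m₂ ∈ ℝ^d with ‖m₁ − m₂‖₂ ≤ Δ, the Rényi divergence of order α between the Gaussian measures N(m₁, ν²I_d) and N(m₂, ν²I_d) on ℝ^d satisfies D_α(N(m₁, ν²I_d) ‖ N(m₂, ν²I_d)) ≤ α·Δ²/(2ν²); in other words, the Gaussian mechanism with noise scale ν applied to a query of ℓ₂-sensitivity Δ satisfies (α, αΔ²/(2ν²))-Rényi differential privacy. -/

import Mathlib

open MeasureTheory ProbabilityTheory

/-- The Rényi divergence of order `α` between two measures:
`D_α(μ‖ν) = (1/(α-1)) log ∫ (dμ/dν)^α dν`. -/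
noncomputable def renyiDivergence {Ω : Type*} [MeasurableSpace Ω] (α : ℝ)
    (μ ν : Measure Ω) : ℝ :=
  (α - 1)⁻¹ * Real.log (∫ x, ((μ.rnDeriv ν x).toReal) ^ α ∂ν)

/-- The Gaussian measure `N(m, ν²I_d)` on `ℝ^d`, the product of the one-dimensional
Gaussian measures `N(m_j, ν²)`. -/
noncomputable def gaussianVec (d : ℕ) (m : Fin d → ℝ) (ν : ℝ) :
    Measure (Fin d → ℝ) :=
  Measure.pi fun j => gaussianReal (m j) (Real.toNNReal (ν ^ 2))

section Aux
open ENNReal NNReal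

lemma lintegral_pi_prod : ∀ {n : ℕ} (μ : Fin n → Measure ℝ), (∀ i, SigmaFinite (μ i)) →
    ∀ (f : Fin n → ℝ → ℝ≥0∞), (∀ i, Measurable (f i)) →
    ∫⁻ x : Fin n → ℝ, ∏ i, f i (x i) ∂Measure.pi μ = ∏ i, ∫⁻ t, f i t ∂μ i := by
  intro n
  induction n with
  | zero =>
    intro μ _ f hf
    rw [Measure.pi_of_empty μ]
    simp
  | succ n ih =>
    intro μ hσ f hf
    haveI := hσ
    have hmp := (measurePreserving_piFinSuccAbove μ 0)
    set G : ℝ × (Fin n → ℝ) → ℝ≥0∞ := fun p => f 0 p.1 * ∏ j, f j.succ (p.2 j) with hG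
    have hGm : Measurable G :=
      ((hf 0).comp measurable_fst).mul
        (Finset.measurable_prod _ fun j _ => (hf j.succ).comp
          ((measurable_pi_apply j).comp measurable_snd))
    have h1 : ∀ x : Fin (n+1) → ℝ, (∏ i, f i (x i)) = G (MeasurableEquiv.piFinSuccAbove (fun _ => ℝ) 0 x) := by
      intro x
      rw [Fin.prod_univ_succ]
      simp [hG, MeasurableEquiv.piFinSuccAbove, Fin.zero_succAbove, Fin.tail]
    calc ∫⁻ x : Fin (n+1) → ℝ, ∏ i, f i (x i) ∂Measure.pi μ
        = ∫⁻ x, G (MeasurableEquiv.piFinSuccAbove (fun _ => ℝ) 0 x) ∂Measure.pi μ := by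
          simp_rw [h1]
      _ = ∫⁻ p, G p ∂((μ 0).prod (Measure.pi fun j => μ (Fin.succAbove 0 j))) :=
          hmp.lintegral_comp hGm
      _ = (∫⁻ t, f 0 t ∂μ 0) * ∫⁻ y : Fin n → ℝ, ∏ j, f j.succ (y j)
            ∂(Measure.pi fun j => μ (Fin.succAbove 0 j)) := by
          exact lintegral_prod_mul (hf 0).aemeasurable
            (Finset.measurable_prod Finset.univ fun (j : Fin n) _ => (hf j.succ).comp (measurable_pi_apply j)).aemeasurable
      _ = ∏ i, ∫⁻ t, f i t ∂μ i := by
          rw [Fin.prod_univ_succ]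
          congr 1
          have h2 : (fun j : Fin n => μ (Fin.succAbove 0 j)) = fun j : Fin n => μ j.succ := by
            funext j; rw [Fin.zero_succAbove]
          rw [h2, ih _ (fun j : Fin n => hσ j.succ) _ (fun j : Fin n => hf j.succ)]

lemma gaussianVec_eq_withDensity (d : ℕ) (m : Fin d → ℝ) {v : ℝ≥0} (hv : v ≠ 0) :
    (Measure.pi fun j => gaussianReal (m j) v) =
      (volume : Measure (Fin d → ℝ)).withDensity fun x => ∏ j, gaussianPDF (m j) v (x j) := by
  refine Measure.pi_eq fun s hs => ?_
  rw [withDensity_apply _ (MeasurableSet.univ_pi hs), ← lintegral_indicator (MeasurableSet.univ_pi hs)]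
  have h1 : ∀ x : Fin d → ℝ, (Set.univ.pi s).indicator (fun x => ∏ j, gaussianPDF (m j) v (x j)) x
      = ∏ j, (s j).indicator (gaussianPDF (m j) v) (x j) := by
    intro x
    by_cases hx : x ∈ Set.univ.pi s
    · rw [Set.indicator_of_mem hx]
      exact Finset.prod_congr rfl fun j _ =>
        (Set.indicator_of_mem (hx j (Set.mem_univ j)) _).symm
    · rw [Set.indicator_of_notMem hx]
      rw [Set.mem_univ_pi] at hx
      push_neg at hx
      obtain ⟨j, hj⟩ := hx
      exact (Finset.prod_eq_zero (Finset.mem_univ j)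
        (Set.indicator_of_notMem hj _)).symm
  simp_rw [h1]
  rw [show (volume : Measure (Fin d → ℝ)) = Measure.pi fun _ => volume from volume_pi]
  rw [lintegral_pi_prod _ (fun _ => inferInstance) _
    (fun j => (measurable_gaussianPDF (m j) v).indicator (hs j))]
  refine Finset.prod_congr rfl fun j _ => ?_
  rw [lintegral_indicator (hs j), gaussianReal_apply _ hv]

lemma onedim_integral (α : ℝ) {s : ℝ} (hs : 0 < s) (a b : ℝ) :
    ∫ t : ℝ, gaussianPDFReal b s.toNNReal t *
        (gaussianPDFReal a s.toNNReal t / gaussianPDFReal b s.toNNReal t) ^ α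
      = Real.exp (α * (α - 1) * (a - b) ^ 2 / (2 * s)) := by
  have hvne : s.toNNReal ≠ 0 := by
    simp [Real.toNNReal_eq_zero, not_le, hs]
  have hvs : ((s.toNNReal : ℝ≥0) : ℝ) = s := Real.coe_toNNReal _ hs.le
  have hc₀ : (0:ℝ) < (Real.sqrt (2 * Real.pi * s))⁻¹ := by positivity
  have key : ∀ t : ℝ, gaussianPDFReal b s.toNNReal t *
      (gaussianPDFReal a s.toNNReal t / gaussianPDFReal b s.toNNReal t) ^ α
      = Real.exp (α * (α - 1) * (a - b) ^ 2 / (2 * s)) *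
        gaussianPDFReal (b + α * (a - b)) s.toNNReal t := by
    intro t
    unfold gaussianPDFReal
    rw [hvs]
    rw [mul_div_mul_left _ _ (ne_of_gt hc₀), ← Real.exp_sub]
    rw [Real.rpow_def_of_pos (Real.exp_pos _), Real.log_exp]
    rw [mul_left_comm, ← Real.exp_add, mul_assoc, ← Real.exp_add]
    congr 1
    field_simp
    ring
  simp_rw [key]
  rw [integral_const_mul, integral_gaussianPDFReal_eq_one _ hvne, mul_one]

end Aux

/-- Rényi differential privacy of the Gaussian mechanism: for `α > 1`, `ν > 0` and means
with `‖m₁ - m₂‖₂ ≤ Δ`, one has `D_α(N(m₁, ν²I) ‖ N(m₂, ν²I)) ≤ αΔ²/(2ν²)`. -/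
theorem renyiDivergence_gaussian_le (d : ℕ) (α ν Δ : ℝ) (hα : 1 < α) (hν : 0 < ν)
    (hΔ : 0 ≤ Δ) (m₁ m₂ : Fin d → ℝ)
    (hm : Real.sqrt (∑ j, (m₁ j - m₂ j) ^ 2) ≤ Δ) :
    renyiDivergence α (gaussianVec d m₁ ν) (gaussianVec d m₂ ν) ≤ α * Δ ^ 2 / (2 * ν ^ 2) := by
  have hs : (0:ℝ) < ν ^ 2 := by positivity
  set v : NNReal := Real.toNNReal (ν ^ 2) with hv
  have hvne : v ≠ 0 := by simp [hv, Real.toNNReal_eq_zero, not_le, hs, hν.ne']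
  have hp₂pos : ∀ (j : Fin d) (t : ℝ), 0 < gaussianPDFReal (m₂ j) v t :=
    fun j t => gaussianPDFReal_pos _ _ _ hvne
  -- the real-valued density ratio
  set R : Fin d → ℝ → ℝ := fun j t => gaussianPDFReal (m₁ j) v t / gaussianPDFReal (m₂ j) v t
    with hR
  have hRnn : ∀ (j : Fin d) (t : ℝ), 0 ≤ R j t := fun j t =>
    div_nonneg (gaussianPDFReal_nonneg _ _ _) (gaussianPDFReal_nonneg _ _ _)
  set D : (Fin d → ℝ) → ENNReal := fun x => ENNReal.ofReal (∏ j, R j (x j)) with hDdef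
  have hDm : Measurable D := by
    apply Measurable.ennreal_ofReal
    exact Finset.measurable_prod _ fun j _ =>
      ((measurable_gaussianPDFReal _ _).comp (measurable_pi_apply j)).div
        ((measurable_gaussianPDFReal _ _).comp (measurable_pi_apply j))
  have hG : ∀ (m : Fin d → ℝ), Measurable fun x : Fin d → ℝ => ∏ j, gaussianPDF (m j) v (x j) :=
    fun m => Finset.measurable_prod _ fun j _ =>
      (measurable_gaussianPDF _ _).comp (measurable_pi_apply j)
  have hμ : gaussianVec d m₁ ν
      = (volume : Measure (Fin d → ℝ)).withDensity fun x => ∏ j, gaussianPDF (m₁ j) v (x j) :=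
    gaussianVec_eq_withDensity d m₁ hvne
  have hν2 : gaussianVec d m₂ ν
      = (volume : Measure (Fin d → ℝ)).withDensity fun x => ∏ j, gaussianPDF (m₂ j) v (x j) :=
    gaussianVec_eq_withDensity d m₂ hvne
  haveI : SigmaFinite (gaussianVec d m₂ ν) := by
    unfold gaussianVec
    infer_instance
  -- μ = ν.withDensity D
  have hμν : gaussianVec d m₁ ν = (gaussianVec d m₂ ν).withDensity D := by
    rw [hν2, ← withDensity_mul _ (hG m₂) hDm, hμ]
    congr 1
    funext x
    simp only [Pi.mul_apply, hDdef, gaussianPDF]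
    have h2 : (∏ j, ENNReal.ofReal (gaussianPDFReal (m₂ j) v (x j)))
        = ENNReal.ofReal (∏ j, gaussianPDFReal (m₂ j) v (x j)) :=
      (ENNReal.ofReal_prod_of_nonneg (fun j _ => gaussianPDFReal_nonneg _ _ _)).symm
    have hnn : (0:ℝ) ≤ ∏ j, gaussianPDFReal (m₂ j) v (x j) :=
      Finset.prod_nonneg fun j _ => gaussianPDFReal_nonneg _ _ _
    have h1' : (∏ j, ENNReal.ofReal (gaussianPDFReal (m₁ j) v (x j)))
        = ENNReal.ofReal (∏ j, gaussianPDFReal (m₁ j) v (x j)) :=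
      (ENNReal.ofReal_prod_of_nonneg (fun j _ => gaussianPDFReal_nonneg _ _ _)).symm
    rw [h1', h2, ← ENNReal.ofReal_mul hnn]
    congr 1
    conv_rhs => rw [← Finset.prod_mul_distrib]
    refine Finset.prod_congr rfl fun j _ => ?_
    rw [hR]
    simp only
    rw [mul_comm, div_mul_cancel₀ _ (ne_of_gt (hp₂pos j (x j)))]
  have hrn : (gaussianVec d m₁ ν).rnDeriv (gaussianVec d m₂ ν) =ᵐ[gaussianVec d m₂ ν] D := by
    rw [hμν]
    exact Measure.rnDeriv_withDensity _ hDm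
  -- compute the integral
  have hint : (∫ x, (((gaussianVec d m₁ ν).rnDeriv (gaussianVec d m₂ ν) x).toReal) ^ α
        ∂(gaussianVec d m₂ ν))
      = Real.exp (∑ j, α * (α - 1) * (m₁ j - m₂ j) ^ 2 / (2 * ν ^ 2)) := by
    have step1 : (∫ x, (((gaussianVec d m₁ ν).rnDeriv (gaussianVec d m₂ ν) x).toReal) ^ α
          ∂(gaussianVec d m₂ ν))
        = ∫ x, ∏ j, (R j (x j)) ^ α ∂(gaussianVec d m₂ ν) := by
      refine integral_congr_ae ?_
      filter_upwards [hrn] with x hx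
      rw [hx, hDdef]
      simp only
      rw [ENNReal.toReal_ofReal (Finset.prod_nonneg fun j _ => hRnn j (x j))]
      exact (Real.finset_prod_rpow _ _ (fun j _ => hRnn j (x j)) α).symm
    rw [step1, hν2]
    have hcoe : (fun x : Fin d → ℝ => ∏ j, gaussianPDF (m₂ j) v (x j))
        = fun x => ((∏ j, (gaussianPDFReal (m₂ j) v (x j)).toNNReal : NNReal) : ENNReal) := by
      funext x
      rw [ENNReal.coe_finset_prod]
      rfl
    have hmeas : Measurable fun x : Fin d → ℝ =>
        ∏ j, (gaussianPDFReal (m₂ j) v (x j)).toNNReal :=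
      Finset.measurable_prod _ fun j _ =>
        ((measurable_gaussianPDFReal _ _).comp (measurable_pi_apply j)).real_toNNReal
    rw [hcoe, integral_withDensity_eq_integral_smul hmeas]
    have step2 : ∀ x : Fin d → ℝ,
        (∏ j, (gaussianPDFReal (m₂ j) v (x j)).toNNReal : NNReal)
            • (∏ j, (R j (x j)) ^ α)
          = ∏ j, (gaussianPDFReal (m₂ j) v (x j) * (R j (x j)) ^ α) := by
      intro x
      rw [NNReal.smul_def, smul_eq_mul, NNReal.coe_prod, ← Finset.prod_mul_distrib]
      refine Finset.prod_congr rfl fun j _ => ?_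
      rw [Real.coe_toNNReal _ (gaussianPDFReal_nonneg _ _ _)]
    simp_rw [step2]
    rw [volume_pi, MeasureTheory.integral_fintype_prod_eq_prod
      (f := fun j t => gaussianPDFReal (m₂ j) v t * (R j t) ^ α)]
    rw [Real.exp_sum]
    refine Finset.prod_congr rfl fun j _ => ?_
    exact onedim_integral α hs (m₁ j) (m₂ j)
  rw [renyiDivergence, hint, Real.log_exp]
  have hsum : ∑ j, α * (α - 1) * (m₁ j - m₂ j) ^ 2 / (2 * ν ^ 2)
      = α * (α - 1) * (∑ j, (m₁ j - m₂ j) ^ 2) / (2 * ν ^ 2) := by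
    rw [← Finset.sum_div, ← Finset.mul_sum]
  rw [hsum]
  have hα1 : α - 1 ≠ 0 := by linarith
  have heq : (α - 1)⁻¹ * (α * (α - 1) * (∑ j, (m₁ j - m₂ j) ^ 2) / (2 * ν ^ 2))
      = α * (∑ j, (m₁ j - m₂ j) ^ 2) / (2 * ν ^ 2) := by
    field_simp
  rw [heq]
  have hSnn : (0:ℝ) ≤ ∑ j, (m₁ j - m₂ j) ^ 2 := Finset.sum_nonneg fun j _ => sq_nonneg _
  have hSle : (∑ j, (m₁ j - m₂ j) ^ 2) ≤ Δ ^ 2 := by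
    have h1 : (∑ j, (m₁ j - m₂ j) ^ 2) = Real.sqrt (∑ j, (m₁ j - m₂ j) ^ 2) ^ 2 :=
      (Real.sq_sqrt hSnn).symm
    rw [h1]
    exact pow_le_pow_left₀ (Real.sqrt_nonneg _) hm 2
  gcongr
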